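/- Let A be an (c+1)×(c+1) invertible block upper bidiagonal matrix with diagonal blocks A_{i,i} and superdiagonal blocks A_{i,i+1}. Suppose each A_{i,i} is invertible with ‖A_{i,i}^{-1}‖ ≤ Λ and ‖A_{i,i}^{-1} A_{i,i+1}‖ ≤ ζ for some ζ < 1. Then ‖A^{-1}‖ ≤ Λ (1 − ζ^{c+1})/(1 − ζ) ≤ Λ/(1 − ζ). -/

import Mathlib

/-- Spectral (operator 2-) norm of a real matrix. -/
noncomputable def specNorm {m n : Type*} [Fintype m] [Fintype n] [DecidableEq n]
    (A : Matrix m n ℝ) : ℝ :=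
  ‖LinearMap.toContinuousLinearMap (Matrix.toEuclideanLin A)‖

section AuxSpec
open scoped Matrix.Norms.L2Operator
open Matrix

lemma specNorm_eq {m n : Type*} [Fintype m] [Fintype n] [DecidableEq n]
    (A : Matrix m n ℝ) : specNorm A = ‖A‖ := rfl

lemma specNorm_nonneg {m n : Type*} [Fintype m] [Fintype n] [DecidableEq n]
    (A : Matrix m n ℝ) : 0 ≤ specNorm A := by rw [specNorm_eq]; exact norm_nonneg A

lemma specNorm_mul_le {n : Type*} [Fintype n] [DecidableEq n]
    (A B : Matrix n n ℝ) : specNorm (A * B) ≤ specNorm A * specNorm B := by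
  simp only [specNorm_eq]; exact Matrix.l2_opNorm_mul A B

lemma specNorm_neg {n : Type*} [Fintype n] [DecidableEq n]
    (A : Matrix n n ℝ) : specNorm (-A) = specNorm A := by
  simp only [specNorm_eq]; exact norm_neg A

lemma specNorm_sum_le {n α : Type*} [Fintype n] [DecidableEq n]
    (s : Finset α) (f : α → Matrix n n ℝ) :
    specNorm (∑ k ∈ s, f k) ≤ ∑ k ∈ s, specNorm (f k) := by
  simp only [specNorm_eq]; exact norm_sum_le s f

/-- Norm of a matrix with blocks `N i` at block positions `(i, i+k)`. -/
lemma offDiag_norm_le {ι : Type*} [Fintype ι] [DecidableEq ι] (c k : ℕ)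
    (N : Fin (c+1) → Matrix ι ι ℝ) (C : ℝ) (hC : 0 ≤ C)
    (hN : ∀ i : Fin (c+1), (i : ℕ) + k ≤ c → specNorm (N i) ≤ C) :
    specNorm (Matrix.of (fun (p q : Fin (c+1) × ι) =>
      if (q.1 : ℕ) = (p.1 : ℕ) + k then N p.1 p.2 q.2 else 0)) ≤ C := by
  set M : Matrix (Fin (c+1) × ι) (Fin (c+1) × ι) ℝ := Matrix.of (fun p q =>
      if (q.1 : ℕ) = (p.1 : ℕ) + k then N p.1 p.2 q.2 else 0) with hM
  rw [specNorm_eq, Matrix.l2_opNorm_def]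
  apply ContinuousLinearMap.opNorm_le_bound _ hC
  intro x
  have hcomp : ∀ (i : Fin (c+1)) (a : ι), (M *ᵥ (WithLp.equiv 2 _ x)) (i, a) =
      if h : (i : ℕ) + k ≤ c then
        (N i *ᵥ (fun b => x (⟨(i:ℕ)+k, by omega⟩, b))) a else 0 := by
    intro i a
    rw [Matrix.mulVec, dotProduct, Fintype.sum_prod_type]
    by_cases h : (i : ℕ) + k ≤ c
    · rw [dif_pos h]
      rw [Finset.sum_eq_single (⟨(i:ℕ)+k, by omega⟩ : Fin (c+1))]
      · simp only [hM, Matrix.of_apply, if_pos rfl]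
        rfl
      · intro j _ hj
        have : ¬ ((j : ℕ) = (i : ℕ) + k) := fun hc => hj (Fin.ext hc)
        simp [hM, this]
      · simp
    · rw [dif_neg h]
      apply Finset.sum_eq_zero
      intro j _
      have : ¬ ((j : ℕ) = (i : ℕ) + k) := by omega
      simp [hM, this]
  set L := (LinearMap.toContinuousLinearMap (Matrix.toEuclideanLin M)) x with hL
  have hx : ∀ p, L p = (M *ᵥ (WithLp.equiv 2 _ x)) p := fun p => rfl
  have hxnorm : ‖x‖ ^ 2 = ∑ p, (x p)^2 := by
    rw [EuclideanSpace.norm_eq, Real.sq_sqrt (by positivity)]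
    simp [Real.norm_eq_abs, sq_abs]
  have hLnorm : ‖L‖ = Real.sqrt (∑ p, (L p)^2) := by
    rw [EuclideanSpace.norm_eq]
    congr 1
    refine Finset.sum_congr rfl fun p _ => ?_
    simp [Real.norm_eq_abs, sq_abs]
  have key : ∑ p, (L p)^2 ≤ C^2 * ‖x‖^2 := by
    rw [Fintype.sum_prod_type, hxnorm]
    set g : Fin (c+1) → ℝ := fun j => ∑ b, (x (j, b))^2 with hg
    have hgnn : ∀ j, 0 ≤ g j := fun j => by positivity
    set e : Fin (c+1) → Fin (c+1) := fun i => ⟨min ((i:ℕ)+k) c, by omega⟩ with he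
    set h : Fin (c+1) → ℝ := fun i => if (i:ℕ) + k ≤ c then C^2 * g (e i) else 0 with hh
    have step1 : ∀ i : Fin (c+1), ∑ a, (L (i,a))^2 ≤ h i := by
      intro i
      by_cases hic : (i:ℕ) + k ≤ c
      · have hei : (⟨(i:ℕ)+k, by omega⟩ : Fin (c+1)) = e i := by
          apply Fin.ext; simp [he, min_eq_left hic]
        have hLa : ∀ a, L (i, a) = (N i *ᵥ fun b => x (e i, b)) a := by
          intro a
          rw [hx, hcomp, dif_pos hic, hei]
        set z : EuclideanSpace ℝ ι := (WithLp.equiv 2 (ι → ℝ)).symm (fun b => x (e i, b)) with hz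
        have hzn : ‖z‖^2 = g (e i) := by
          rw [EuclideanSpace.norm_eq, Real.sq_sqrt (by positivity)]
          simp [hz, hg, Real.norm_eq_abs, sq_abs]
        have h1 : ∑ a, (L (i,a))^2 = ‖(EuclideanSpace.equiv ι ℝ).symm (N i *ᵥ z)‖^2 := by
          rw [EuclideanSpace.norm_eq, Real.sq_sqrt (by positivity)]
          refine Finset.sum_congr rfl fun a _ => ?_
          rw [hLa a]
          simp [Real.norm_eq_abs, sq_abs]
          rfl
        have h2 : ‖(EuclideanSpace.equiv ι ℝ).symm (N i *ᵥ z)‖ ≤ C * ‖z‖ := by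
          refine le_trans (Matrix.l2_opNorm_mulVec (N i) z) ?_
          have := hN i hic
          rw [specNorm_eq] at this
          exact mul_le_mul_of_nonneg_right this (norm_nonneg z)
        have h3 : ‖(EuclideanSpace.equiv ι ℝ).symm (N i *ᵥ z)‖^2 ≤ (C * ‖z‖)^2 :=
          pow_le_pow_left₀ (norm_nonneg _) h2 2
        have hhi : h i = C^2 * g (e i) := by simp [hh, hic]
        rw [h1, hhi]
        calc _ ≤ (C * ‖z‖)^2 := h3
          _ = C^2 * ‖z‖^2 := by ring
          _ = C^2 * g (e i) := by rw [hzn]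
      · have hLa : ∀ a, L (i, a) = 0 := by
          intro a; rw [hx, hcomp, dif_neg hic]
        simp only [hLa, hh, if_neg hic]
        simp
    have step2 : ∑ i, h i ≤ C^2 * ∑ j, g j := by
      have heq : ∑ i, h i = C^2 * ∑ i ∈ Finset.univ.filter
          (fun i : Fin (c+1) => (i:ℕ)+k ≤ c), g (e i) := by
        rw [Finset.mul_sum, Finset.sum_filter]
      rw [heq]
      refine mul_le_mul_of_nonneg_left ?_ (by positivity)
      have hinj : ∀ i ∈ Finset.univ.filter (fun i : Fin (c+1) => (i:ℕ)+k ≤ c),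
          ∀ i' ∈ Finset.univ.filter (fun i : Fin (c+1) => (i:ℕ)+k ≤ c), e i = e i' → i = i' := by
        intro i hi i' hi' hee
        simp only [Finset.mem_filter] at hi hi'
        have : ((e i : Fin (c+1)) : ℕ) = ((e i' : Fin (c+1)) : ℕ) := by rw [hee]
        simp only [he, min_eq_left hi.2, min_eq_left hi'.2] at this
        exact Fin.ext (by omega)
      rw [← Finset.sum_image hinj]
      exact Finset.sum_le_sum_of_subset_of_nonneg (Finset.subset_univ _) (fun j _ _ => hgnn j)
    calc ∑ i : Fin (c+1), ∑ a, (L (i,a))^2 ≤ ∑ i, h i := Finset.sum_le_sum (fun i _ => step1 i)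
      _ ≤ C^2 * ∑ j, g j := step2
      _ = C^2 * ∑ p : Fin (c+1) × ι, (x p)^2 := by rw [Fintype.sum_prod_type]
  calc ‖L‖ = Real.sqrt (∑ p, (L p)^2) := hLnorm
    _ ≤ Real.sqrt (C^2 * ‖x‖^2) := Real.sqrt_le_sqrt key
    _ = C * ‖x‖ := by rw [← mul_pow, Real.sqrt_sq (by positivity)]

end AuxSpec

section Aux2
set_option linter.unusedSectionVars false
variable {ι : Type*} [Fintype ι] [DecidableEq ι]

/-- chain of blocks -/
noncomputable def bchain (D' S' : ℕ → Matrix ι ι ℝ) : ℕ → ℕ → Matrix ι ι ℝ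
  | i, 0 => (D' i)⁻¹
  | i, k+1 => (-((D' i)⁻¹ * S' i)) * bchain D' S' (i+1) k

lemma bchain_norm_le (D' S' : ℕ → Matrix ι ι ℝ) (Λ ζ : ℝ) (c : ℕ)
    (hΛ : ∀ n ≤ c, specNorm (D' n)⁻¹ ≤ Λ) (hζ : ∀ n < c, specNorm ((D' n)⁻¹ * S' n) ≤ ζ) :
    ∀ k i, i + k ≤ c → specNorm (bchain D' S' i k) ≤ Λ * ζ ^ k := by
  intro k
  induction k with
  | zero => intro i hi; simpa [bchain] using hΛ i (by omega)
  | succ k ih =>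
    intro i hi
    have h1 : specNorm (bchain D' S' i (k+1)) ≤
        specNorm (-((D' i)⁻¹ * S' i)) * specNorm (bchain D' S' (i+1) k) :=
      specNorm_mul_le _ _
    rw [specNorm_neg] at h1
    have h2 : specNorm ((D' i)⁻¹ * S' i) ≤ ζ := hζ i (by omega)
    have h3 : specNorm (bchain D' S' (i+1) k) ≤ Λ * ζ ^ k := ih (i+1) (by omega)
    have hζ0 : 0 ≤ ζ := le_trans (specNorm_nonneg _) h2
    have hch0 : 0 ≤ specNorm (bchain D' S' (i+1) k) := specNorm_nonneg _
    calc specNorm (bchain D' S' i (k+1)) ≤ _ := h1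
      _ ≤ ζ * (Λ * ζ ^ k) := mul_le_mul h2 h3 hch0 hζ0
      _ = Λ * ζ ^ (k+1) := by ring

def blockify (c : ℕ) (G : Fin (c+1) → Fin (c+1) → Matrix ι ι ℝ) :
    Matrix (Fin (c+1) × ι) (Fin (c+1) × ι) ℝ :=
  Matrix.of fun p q => G p.1 q.1 p.2 q.2

lemma blockify_mul (c : ℕ) (G H : Fin (c+1) → Fin (c+1) → Matrix ι ι ℝ) :
    blockify c G * blockify c H = blockify c (fun i j => ∑ l, G i l * H l j) := by
  ext p q
  simp only [blockify, Matrix.mul_apply, Matrix.of_apply, Fintype.sum_prod_type,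
    Finset.sum_apply, Matrix.sum_apply]
  try rw [Finset.sum_comm]

lemma blockify_one (c : ℕ) :
    blockify (ι := ι) c (fun i j => if i = j then 1 else 0) = 1 := by
  ext p q
  simp only [blockify, Matrix.of_apply, Matrix.one_apply]
  by_cases h1 : p.1 = q.1
  · by_cases h2 : p.2 = q.2
    · simp [h1, h2, Prod.ext_iff, Matrix.one_apply]
    · simp [h1, h2, Prod.ext_iff, Matrix.one_apply]
  · simp [h1, Prod.ext_iff]

end Aux2

theorem stmt_2 {ι : Type*} [Fintype ι] [DecidableEq ι] [Nonempty ι] (c : ℕ)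
    (D S : Fin (c + 1) → Matrix ι ι ℝ)
    (A : Matrix (Fin (c + 1) × ι) (Fin (c + 1) × ι) ℝ)
    (hA : A = fun p q =>
      if q.1 = p.1 then D p.1 p.2 q.2
      else if (q.1 : ℕ) = (p.1 : ℕ) + 1 then S p.1 p.2 q.2
      else 0)
    (hAunit : IsUnit A) (hD : ∀ i, IsUnit (D i))
    (Λ ζ : ℝ) (hζ0 : 0 ≤ ζ) (hζ1 : ζ < 1)
    (hΛ : ∀ i, specNorm (D i)⁻¹ ≤ Λ)
    (hζ : ∀ i : Fin (c + 1), (i : ℕ) < c → specNorm ((D i)⁻¹ * S i) ≤ ζ) :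
    specNorm A⁻¹ ≤ Λ * (1 - ζ ^ (c + 1)) / (1 - ζ) ∧
      Λ * (1 - ζ ^ (c + 1)) / (1 - ζ) ≤ Λ / (1 - ζ) := by
  have hΛ0 : 0 ≤ Λ := le_trans (specNorm_nonneg _) (hΛ 0)
  have h1ζ : 0 < 1 - ζ := by linarith
  -- extend D, S to ℕ
  set D' : ℕ → Matrix ι ι ℝ := fun n => if h : n < c+1 then D ⟨n, h⟩ else 1 with hD'
  set S' : ℕ → Matrix ι ι ℝ := fun n => if h : n < c+1 then S ⟨n, h⟩ else 1 with hS'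
  have hD'i : ∀ i : Fin (c+1), D' (i : ℕ) = D i := by
    intro i; simp [hD', i.isLt]; intro h; omega
  have hS'i : ∀ i : Fin (c+1), S' (i : ℕ) = S i := by
    intro i; simp [hS', i.isLt]; intro h; omega
  -- the explicit inverse
  set GB : Fin (c+1) → Fin (c+1) → Matrix ι ι ℝ :=
    fun l j => if (l : ℕ) ≤ (j : ℕ) then bchain D' S' l ((j : ℕ) - l) else 0 with hGB
  set B := blockify c GB with hB
  have hDD : ∀ i : Fin (c+1), D i * (D' (i:ℕ))⁻¹ = 1 := by
    intro i
    rw [hD'i]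
    exact Matrix.mul_nonsing_inv _ ((Matrix.isUnit_iff_isUnit_det _).mp (hD i))
  have hGA : A = blockify c
      (fun i l => if l = i then D i else if (l:ℕ) = (i:ℕ)+1 then S i else 0) := by
    rw [hA]
    ext p q
    simp only [blockify, Matrix.of_apply]
    by_cases h1 : q.1 = p.1
    · simp [h1]
    · by_cases h2 : (q.1:ℕ) = (p.1:ℕ)+1 <;> simp [h1, h2]
  have hAB : A * B = 1 := by
    rw [hGA, hB, blockify_mul, ← blockify_one c]
    refine congrArg (blockify c) ?_
    funext i j
    have hsplit : ∀ l : Fin (c+1),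
        (if l = i then D i else if (l:ℕ) = (i:ℕ)+1 then S i else 0) * GB l j
        = (if l = i then D i * GB i j else 0)
          + (if (l:ℕ) = (i:ℕ)+1 then S i * GB l j else 0) := by
      intro l
      by_cases h1 : l = i
      · subst h1
        rw [if_pos rfl, if_pos rfl, if_neg (by omega), add_zero]
      · rw [if_neg h1, if_neg h1, zero_add]
        by_cases h2 : (l:ℕ) = (i:ℕ)+1
        · rw [if_pos h2, if_pos h2]
        · rw [if_neg h2, if_neg h2, Matrix.zero_mul]
    rw [Finset.sum_congr rfl (fun l _ => hsplit l), Finset.sum_add_distrib]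
    have hfirst : ∑ l : Fin (c+1), (if l = i then D i * GB i j else 0) = D i * GB i j := by
      rw [Finset.sum_ite_eq' Finset.univ i (fun _ => D i * GB i j)]
      simp
    have hsecond : ∑ l : Fin (c+1), (if (l:ℕ) = (i:ℕ)+1 then S i * GB l j else 0)
        = if h : (i:ℕ) < c then S i * GB ⟨(i:ℕ)+1, by omega⟩ j else 0 := by
      by_cases hic : (i:ℕ) < c
      · rw [dif_pos hic, Finset.sum_eq_single (⟨(i:ℕ)+1, by omega⟩ : Fin (c+1))]
        · rw [if_pos rfl]
        · intro l _ hl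
          rw [if_neg (fun hc => hl (Fin.ext hc))]
        · simp
      · rw [dif_neg hic]
        apply Finset.sum_eq_zero
        intro l _
        have h1 := l.isLt
        have h2 := i.isLt
        rw [if_neg (by omega)]
    rw [hfirst, hsecond]
    rcases lt_trichotomy (i:ℕ) (j:ℕ) with hij | hij | hij
    · -- i < j : terms cancel
      have hic : (i:ℕ) < c := by have := j.isLt; omega
      have e1 : GB i j = bchain D' S' (i:ℕ) (((j:ℕ) - (i:ℕ) - 1)+1) := by
        simp only [hGB]
        rw [if_pos (le_of_lt hij)]
        conv_lhs => rw [show (j:ℕ) - (i:ℕ) = ((j:ℕ) - (i:ℕ) - 1) + 1 from by omega]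
      have e2 : GB ⟨(i:ℕ)+1, by omega⟩ j = bchain D' S' ((i:ℕ)+1) ((j:ℕ) - (i:ℕ) - 1) := by
        simp only [hGB]
        rw [if_pos (show ((i:ℕ)+1 : ℕ) ≤ (j:ℕ) by omega)]
        congr 1
      have e3 : D i * bchain D' S' (i:ℕ) (((j:ℕ) - (i:ℕ) - 1)+1)
          = -(S i * bchain D' S' ((i:ℕ)+1) ((j:ℕ) - (i:ℕ) - 1)) := by
        show D i * ((-((D' (i:ℕ))⁻¹ * S' (i:ℕ))) * bchain D' S' ((i:ℕ)+1) ((j:ℕ) - (i:ℕ) - 1)) = _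
        rw [hS'i, neg_mul, mul_neg, ← Matrix.mul_assoc, ← Matrix.mul_assoc, hDD,
          Matrix.one_mul]
      rw [dif_pos hic, e1, e2, e3, if_neg (fun hc => by rw [hc] at hij; omega)]
      exact neg_add_cancel _
    · -- i = j : identity block
      have hij' : i = j := Fin.ext hij
      subst hij'
      have e1 : GB i i = (D' (i:ℕ))⁻¹ := by
        simp only [hGB]
        rw [if_pos le_rfl]
        simp [bchain]
      have e2 : (if h : (i:ℕ) < c then S i * GB ⟨(i:ℕ)+1, by omega⟩ i else 0) = 0 := by
        by_cases hic : (i:ℕ) < c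
        · rw [dif_pos hic]
          have : GB ⟨(i:ℕ)+1, by omega⟩ i = 0 := by
            simp only [hGB]
            rw [if_neg (by simp)]
          rw [this, Matrix.mul_zero]
        · rw [dif_neg hic]
      rw [e1, e2, hDD, add_zero, if_pos rfl]
    · -- j < i : everything is zero
      have e1 : GB i j = 0 := by
        simp only [hGB]
        rw [if_neg (by omega)]
      have e2 : (if h : (i:ℕ) < c then S i * GB ⟨(i:ℕ)+1, by omega⟩ j else 0) = 0 := by
        by_cases hic : (i:ℕ) < c
        · rw [dif_pos hic]
          have : GB ⟨(i:ℕ)+1, by omega⟩ j = 0 := by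
            simp only [hGB]
            rw [if_neg (by simp; omega)]
          rw [this, Matrix.mul_zero]
        · rw [dif_neg hic]
      rw [e1, e2, Matrix.mul_zero, add_zero, if_neg (fun hc => by rw [hc] at hij; omega)]
  rw [Matrix.inv_eq_right_inv hAB]
  set Λmat : ℕ → Matrix (Fin (c+1) × ι) (Fin (c+1) × ι) ℝ := fun k =>
    Matrix.of (fun p q => if (q.1 : ℕ) = (p.1 : ℕ) + k
      then bchain D' S' (p.1 : ℕ) k p.2 q.2 else 0) with hΛmat
  have hBsum : B = ∑ k ∈ Finset.range (c+1), Λmat k := by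
    ext p q
    rw [Matrix.sum_apply]
    simp only [hB, hΛmat, blockify, hGB, Matrix.of_apply]
    by_cases hpq : (p.1 : ℕ) ≤ (q.1 : ℕ)
    · rw [if_pos hpq,
        Finset.sum_eq_single_of_mem ((q.1:ℕ) - (p.1:ℕ))
          (Finset.mem_range.mpr (by have := q.1.isLt; omega))]
      · rw [if_pos (by omega)]
      · intro k _ hk
        rw [if_neg (by omega)]
    · rw [if_neg hpq]
      symm
      apply Finset.sum_eq_zero
      intro k _
      rw [if_neg (by omega)]
  have hΛk : ∀ k, specNorm (Λmat k) ≤ Λ * ζ ^ k := by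
    intro k
    refine offDiag_norm_le c k (fun i => bchain D' S' (i:ℕ) k) _ (by positivity) ?_
    intro i hik
    refine bchain_norm_le D' S' Λ ζ c ?_ ?_ k (i:ℕ) hik
    · intro n hn
      have h1 : D' n = D ⟨n, by omega⟩ := by simp only [hD']; exact dif_pos (by omega)
      rw [h1]
      exact hΛ _
    · intro n hn
      have h1 : D' n = D ⟨n, by omega⟩ := by simp only [hD']; exact dif_pos (by omega)
      have h2 : S' n = S ⟨n, by omega⟩ := by simp only [hS']; exact dif_pos (by omega)
      rw [h1, h2]
      exact hζ ⟨n, by omega⟩ hn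
  have hmain : specNorm B ≤ Λ * (1 - ζ ^ (c+1)) / (1 - ζ) := by
    calc specNorm B = specNorm (∑ k ∈ Finset.range (c+1), Λmat k) := by rw [hBsum]
      _ ≤ ∑ k ∈ Finset.range (c+1), specNorm (Λmat k) := specNorm_sum_le _ _
      _ ≤ ∑ k ∈ Finset.range (c+1), Λ * ζ ^ k :=
        Finset.sum_le_sum fun k _ => hΛk k
      _ = Λ * ∑ k ∈ Finset.range (c+1), ζ ^ k := by rw [Finset.mul_sum]
      _ = Λ * ((1 - ζ ^ (c+1)) / (1 - ζ)) := by
        rw [geom_sum_eq (ne_of_lt hζ1), ← neg_div_neg_eq, neg_sub, neg_sub]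
      _ = Λ * (1 - ζ ^ (c+1)) / (1 - ζ) := (mul_div_assoc _ _ _).symm
  refine ⟨hmain, ?_⟩
  have hnum : Λ * (1 - ζ ^ (c+1)) ≤ Λ := by nlinarith [pow_nonneg hζ0 (c+1)]
  exact div_le_div_of_nonneg_right hnum h1ζ.le |>.trans_eq rfl
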